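/- For every real number x > 0, one has sqrt(2e) * ((x + 1/2)/e)^(x + 1/2) ≤ Γ(x + 1) ≤ sqrt(2π) * ((x + 1/2)/e)^(x + 1/2), where Γ denotes the Gamma function; moreover the constants sqrt(2e) and sqrt(2π) make both inequalities valid for all x > 0. -/

import Mathlib

open Real Filter Topology

noncomputable def del (a : ℝ) : ℝ :=
  Real.log a - (a + 1/2) * Real.log (a + 1/2) + (a - 1/2) * Real.log (a - 1/2) + 1

noncomputable def hfun (x : ℝ) : ℝ :=
  Real.log (Real.Gamma (x + 1)) - (x + 1/2) * Real.log (x + 1/2) + (x + 1/2)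

lemma two_mul_le_log {t : ℝ} (ht : 0 ≤ t) (ht' : t < 1) :
    2 * t ≤ Real.log (1 + t) - Real.log (1 - t) := by
  set g : ℝ → ℝ := fun t => Real.log (1 + t) - Real.log (1 - t) - 2 * t with hg
  have hderiv : ∀ y ∈ Set.Ioo (0:ℝ) 1, HasDerivAt g (1/(1+y) + 1/(1-y) - 2) y := by
    intro y hy
    have h1 : (0:ℝ) < 1 + y := by linarith [hy.1]
    have h2 : (0:ℝ) < 1 - y := by linarith [hy.2]
    have d1 : HasDerivAt (fun t : ℝ => Real.log (1 + t)) (1/(1+y)) y := by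
      simpa [one_div, Function.comp_def] using (Real.hasDerivAt_log h1.ne').comp y ((hasDerivAt_id y).const_add 1)
    have d2 : HasDerivAt (fun t : ℝ => Real.log (1 - t)) (-(1/(1-y))) y := by
      have hlin : HasDerivAt (fun t : ℝ => 1 - t) (-1) y := by
        simpa using (hasDerivAt_id y).const_sub 1
      have := (Real.hasDerivAt_log h2.ne').comp y hlin
      simpa [one_div, Function.comp_def] using this
    have d3 : HasDerivAt (fun t : ℝ => 2 * t) 2 y := by
      simpa using (hasDerivAt_id y).const_mul 2
    have := (d1.sub d2).sub d3
    exact this.congr_deriv (by ring)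
  have key : MonotoneOn g (Set.Ico (0:ℝ) 1) := by
    apply monotoneOn_of_deriv_nonneg (convex_Ico 0 1)
    · apply ContinuousOn.sub
      apply ContinuousOn.sub
      · apply ContinuousOn.log (by fun_prop)
        intro s hs
        have : (0:ℝ) < 1 + s := by have := hs.1; simp at this ⊢; linarith
        exact this.ne'
      · apply ContinuousOn.log (by fun_prop)
        intro s hs
        have : (0:ℝ) < 1 - s := by have := hs.2; simp at this ⊢; linarith
        exact this.ne'
      · fun_prop
    · intro y hy
      rw [interior_Ico] at hy
      exact (hderiv y hy).differentiableAt.differentiableWithinAt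
    · intro y hy
      rw [interior_Ico] at hy
      rw [(hderiv y hy).deriv]
      have h1 : (0:ℝ) < 1 + y := by linarith [hy.1]
      have h2 : (0:ℝ) < 1 - y := by linarith [hy.2]
      have hp : 0 < (1+y)*(1-y) := by positivity
      have he : 1/(1+y) + 1/(1-y) = 2/((1+y)*(1-y)) := by field_simp; ring
      rw [he]
      have h1' : (1+y)*(1-y) ≤ 1 := by nlinarith [sq_nonneg y]
      have : (2:ℝ) ≤ 2/((1+y)*(1-y)) := by
        rw [le_div_iff₀ hp]; nlinarith [sq_nonneg y]
      linarith
  have h0 : g 0 = 0 := by simp [hg]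
  have := key (Set.mem_Ico.mpr ⟨le_refl 0, one_pos⟩) (Set.mem_Ico.mpr ⟨ht, ht'⟩) ht
  rw [h0] at this
  simp only [hg] at this
  linarith

lemma hasDerivAt_del {a : ℝ} (ha : 1/2 < a) :
    HasDerivAt del (1/a - Real.log (a + 1/2) + Real.log (a - 1/2)) a := by
  have h0 : (0:ℝ) < a := by linarith
  have h1 : (0:ℝ) < a + 1/2 := by linarith
  have h2 : (0:ℝ) < a - 1/2 := by linarith
  have d1 : HasDerivAt Real.log (1/a) a := by
    simpa [one_div] using Real.hasDerivAt_log h0.ne'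
  have l1 : HasDerivAt (fun b : ℝ => Real.log (b + 1/2)) (1/(a+1/2)) a := by
    simpa [one_div, Function.comp_def] using (Real.hasDerivAt_log h1.ne').comp a ((hasDerivAt_id a).add_const (1/2))
  have l2 : HasDerivAt (fun b : ℝ => Real.log (b - 1/2)) (1/(a-1/2)) a := by
    simpa [one_div, Function.comp_def] using (Real.hasDerivAt_log h2.ne').comp a ((hasDerivAt_id a).sub_const (1/2))
  have d2 : HasDerivAt (fun b : ℝ => (b + 1/2) * Real.log (b + 1/2))
      (1 * Real.log (a + 1/2) + (a + 1/2) * (1/(a+1/2))) a :=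
    (((hasDerivAt_id a).add_const (1/2))).mul l1
  have d3 : HasDerivAt (fun b : ℝ => (b - 1/2) * Real.log (b - 1/2))
      (1 * Real.log (a - 1/2) + (a - 1/2) * (1/(a-1/2))) a :=
    (((hasDerivAt_id a).sub_const (1/2))).mul l2
  have := ((d1.sub d2).add d3).add_const 1
  refine this.congr_deriv ?_
  have c1 : (a + 1/2) * (1/(a+1/2)) = 1 := by rw [mul_one_div, div_self h1.ne']
  have c2 : (a - 1/2) * (1/(a-1/2)) = 1 := by rw [mul_one_div, div_self h2.ne']
  rw [c1, c2]
  ring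

lemma antitone_del : AntitoneOn del (Set.Ioi (1/2 : ℝ)) := by
  apply antitoneOn_of_deriv_nonpos (convex_Ioi _)
  · intro a ha
    exact (hasDerivAt_del ha).continuousAt.continuousWithinAt
  · intro a ha
    rw [interior_Ioi] at ha
    exact (hasDerivAt_del ha).differentiableAt.differentiableWithinAt
  · intro a ha
    rw [interior_Ioi] at ha
    rw [(hasDerivAt_del ha).deriv]
    have h0 : (0:ℝ) < a := by have : (1:ℝ)/2 < a := ha; linarith
    set t : ℝ := 1/(2*a) with hts
    have ht : 0 ≤ t := by positivity
    have ht' : t < 1 := by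
      rw [hts, div_lt_one (by linarith)]
      have : (1:ℝ)/2 < a := ha
      linarith
    have key := two_mul_le_log ht ht'
    have e1 : a + 1/2 = a * (1 + t) := by rw [hts]; field_simp; try ring
    have e2 : a - 1/2 = a * (1 - t) := by rw [hts]; field_simp; try ring
    have h1t : (0:ℝ) < 1 + t := by linarith
    have h2t : (0:ℝ) < 1 - t := by linarith
    rw [e1, e2, Real.log_mul h0.ne' h1t.ne', Real.log_mul h0.ne' h2t.ne']
    have e3 : 2 * t = 1/a := by rw [hts]; field_simp; try ring
    linarith [key, e3 ▸ key]

lemma tendsto_del : Tendsto del atTop (𝓝 0) := by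
  have T1 : Tendsto (fun a : ℝ => a * Real.log (1 + (1/2) / a)) atTop (𝓝 (1/2)) :=
    Real.tendsto_mul_log_one_add_div_atTop (1/2)
  have T2 : Tendsto (fun a : ℝ => a * Real.log (1 + (-(1/2)) / a)) atTop (𝓝 (-(1/2))) :=
    Real.tendsto_mul_log_one_add_div_atTop (-(1/2))
  have S : ∀ c : ℝ, Tendsto (fun a : ℝ => Real.log (1 + c / a)) atTop (𝓝 0) := by
    intro c
    have h2 : Tendsto (fun a : ℝ => 1 + c / a) atTop (𝓝 1) := by
      simpa [div_eq_mul_inv] using (tendsto_inv_atTop_zero.const_mul c).const_add (1:ℝ)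
    have := (Real.continuousAt_log one_ne_zero).tendsto.comp h2
    simpa [Function.comp_def] using this
  have T : Tendsto (fun a : ℝ =>
      1 - (a * Real.log (1 + (1/2)/a) + (1/2) * Real.log (1 + (1/2)/a))
        + (a * Real.log (1 + (-(1/2))/a) - (1/2) * Real.log (1 + (-(1/2))/a)))
      atTop (𝓝 (1 - (1/2 + (1/2) * 0) + (-(1/2) - (1/2) * 0))) := by
    exact (tendsto_const_nhds.sub (T1.add ((S (1/2)).const_mul (1/2)))).add
      (T2.sub ((S (-(1/2))).const_mul (1/2)))
  have : (1 : ℝ) - (1/2 + (1/2) * 0) + (-(1/2) - (1/2) * 0) = 0 := by norm_num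
  rw [this] at T
  apply T.congr'
  filter_upwards [eventually_gt_atTop (1/2 : ℝ)] with a ha
  have h0 : (0:ℝ) < a := by linarith
  have h1t : (0:ℝ) < 1 + (1/2)/a := by positivity
  have h2t : (0:ℝ) < 1 + (-(1/2))/a := by
    have : (1:ℝ)/2 / a < 1 := by rw [div_lt_one h0]; linarith
    have e : 1 + (-(1/2))/a = 1 - (1/2)/a := by ring
    rw [e]; linarith
  have e1 : a + 1/2 = a * (1 + (1/2)/a) := by field_simp; try ring
  have e2 : a - 1/2 = a * (1 + (-(1/2))/a) := by field_simp; try ring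
  have l1 : Real.log (a + 1/2) = Real.log a + Real.log (1 + (1/2)/a) := by
    rw [e1, Real.log_mul h0.ne' h1t.ne']
  have l2 : Real.log (a - 1/2) = Real.log a + Real.log (1 + (-(1/2))/a) := by
    rw [e2, Real.log_mul h0.ne' h2t.ne']
  rw [del, l1, l2]
  ring

lemma del_nonneg {a : ℝ} (ha : 1/2 < a) : 0 ≤ del a := by
  apply le_of_tendsto tendsto_del
  filter_upwards [eventually_ge_atTop a] with b hb
  exact antitone_del ha (lt_of_lt_of_le ha hb) hb
lemma hfun_step {x : ℝ} (hx : 0 ≤ x) : hfun (x + 1) = hfun x + del (x + 1) := by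
  have h1 : (0:ℝ) < x + 1 := by linarith
  unfold hfun del
  rw [Real.Gamma_add_one h1.ne', Real.log_mul h1.ne' (Real.Gamma_pos_of_pos h1).ne']
  have e : x + 1 - 1/2 = x + 1/2 := by ring
  rw [e]
  ring

lemma hfun_le {x : ℝ} (hx : 0 < x) (n : ℕ) : hfun x ≤ hfun (x + n) := by
  induction n with
  | zero => simp
  | succ n ih =>
    have hxn : (0:ℝ) ≤ x + n := by positivity
    have e : x + (n + 1 : ℕ) = (x + n) + 1 := by push_cast; ring
    rw [e, hfun_step hxn]
    have : 0 ≤ del (x + n + 1) := del_nonneg (by linarith [Nat.cast_nonneg (α := ℝ) n])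
    linarith

lemma hfun_diff {x : ℝ} (hx : 0 < x) (n : ℕ) :
    hfun (x + n) - hfun (n : ℝ) ≤ hfun x - hfun 0 := by
  induction n with
  | zero => simp
  | succ n ih =>
    have hn0 : (0:ℝ) ≤ (n:ℝ) := Nat.cast_nonneg n
    have e1 : x + ((n:ℕ) + 1 : ℕ) = (x + n) + 1 := by push_cast; ring
    have e2 : (((n:ℕ) + 1 : ℕ) : ℝ) = (n : ℝ) + 1 := by push_cast; ring
    rw [e1, e2, hfun_step (by linarith), hfun_step hn0]
    have hd : del (x + n + 1) ≤ del ((n:ℝ) + 1) := by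
      apply antitone_del (by simp; linarith) (by simp; linarith) (by linarith)
    linarith
lemma tendsto_hfun {x : ℝ} (hx : 0 < x) :
    Tendsto (fun n : ℕ => hfun (x + n)) atTop (𝓝 (Real.log (Real.sqrt (2 * π)))) := by
  set c : ℝ := x + 1/2 with hc
  have hcpos : 0 < c := by rw [hc]; linarith
  have A : Tendsto (fun n : ℕ => Real.log (Real.Gamma x) - Real.BohrMollerup.logGammaSeq x n)
      atTop (𝓝 0) := by
    simpa using (Real.BohrMollerup.tendsto_log_gamma hx).const_sub (Real.log (Real.Gamma x))
  have hsqrtpi : (0:ℝ) < Real.sqrt π := Real.sqrt_pos.mpr pi_pos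
  have B : Tendsto (fun n : ℕ => Real.log (Stirling.stirlingSeq n)) atTop
      (𝓝 (Real.log (Real.sqrt π))) :=
    ((Real.continuousAt_log hsqrtpi.ne').tendsto).comp Stirling.tendsto_stirlingSeq_sqrt_pi
  have C : Tendsto (fun n : ℕ => (n:ℝ) * Real.log (1 + c / n)) atTop (𝓝 c) :=
    (Real.tendsto_mul_log_one_add_div_atTop c).comp tendsto_natCast_atTop_atTop
  have D : Tendsto (fun n : ℕ => Real.log (1 + c / n)) atTop (𝓝 0) := by
    have h2 : Tendsto (fun n : ℕ => 1 + c / (n:ℝ)) atTop (𝓝 1) := by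
      have := (tendsto_inv_atTop_zero.const_mul c).comp
        (tendsto_natCast_atTop_atTop (R := ℝ))
      simpa [div_eq_mul_inv] using this.const_add (1:ℝ)
    simpa [Function.comp_def] using ((Real.continuousAt_log one_ne_zero).tendsto).comp h2
  have T : Tendsto (fun n : ℕ =>
      (Real.log (Real.Gamma x) - Real.BohrMollerup.logGammaSeq x n)
        + Real.log (Stirling.stirlingSeq n) + (1/2) * Real.log 2
        - ((n:ℝ) * Real.log (1 + c / n) + c * Real.log (1 + c / n)) + (x + 1/2))
      atTop (𝓝 (0 + Real.log (Real.sqrt π) + (1/2) * Real.log 2 - (c + c * 0) + (x + 1/2))) :=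
    ((((A.add B).add tendsto_const_nhds).sub (C.add (D.const_mul c))).add tendsto_const_nhds)
  have hval : 0 + Real.log (Real.sqrt π) + (1/2) * Real.log 2 - (c + c * 0) + (x + 1/2)
      = Real.log (Real.sqrt (2 * π)) := by
    rw [Real.sqrt_mul (by norm_num : (0:ℝ) ≤ 2), Real.log_mul (by positivity) hsqrtpi.ne',
      Real.log_sqrt (by norm_num : (0:ℝ) ≤ 2), hc]
    ring
  rw [hval] at T
  apply T.congr'
  filter_upwards [eventually_ge_atTop 1] with n hn
  have hn0 : (0:ℝ) < (n:ℝ) := by exact_mod_cast hn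
  -- Gamma recurrence summed
  have hfeq : ∀ {y : ℝ}, 0 < y →
      (Real.log ∘ Real.Gamma) (y + 1) = (Real.log ∘ Real.Gamma) y + Real.log y := by
    intro y hy
    simp only [Function.comp_apply]
    rw [Real.Gamma_add_one hy.ne', Real.log_mul hy.ne' (Real.Gamma_pos_of_pos hy).ne', add_comm]
  have hGam := Real.BohrMollerup.f_add_nat_eq (f := Real.log ∘ Real.Gamma) hfeq hx (n + 1)
  simp only [Function.comp_apply] at hGam
  have ecast : x + ((n:ℕ) + 1 : ℕ) = x + n + 1 := by push_cast; ring
  rw [ecast] at hGam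
  -- logGammaSeq unfolded
  have hseq : ∑ m ∈ Finset.range (n + 1), Real.log (x + m)
      = x * Real.log n + Real.log (n.factorial : ℝ) - Real.BohrMollerup.logGammaSeq x n := by
    rw [Real.BohrMollerup.logGammaSeq]; ring
  -- Stirling formula for log n!
  have hstir : Real.log (n.factorial : ℝ) = Real.log (Stirling.stirlingSeq n)
      + (1/2) * Real.log 2 + (1/2) * Real.log n + (n:ℝ) * Real.log n - n := by
    have := Stirling.log_stirlingSeq_formula n
    have e2 : Real.log (2 * (n:ℝ)) = Real.log 2 + Real.log n :=
      Real.log_mul (by norm_num) hn0.ne'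
    have e3 : Real.log ((n:ℝ) / Real.exp 1) = Real.log n - 1 := by
      rw [Real.log_div hn0.ne' (Real.exp_ne_zero 1), Real.log_exp]
    rw [e2, e3] at this
    have : Real.log (Stirling.stirlingSeq n)
        = Real.log (n.factorial : ℝ) - 1/2 * (Real.log 2 + Real.log n)
          - n * (Real.log n - 1) := this
    linarith [this]
  -- log (x + n + 1/2) split
  have hlog : Real.log (x + n + 1/2) = Real.log n + Real.log (1 + c / n) := by
    have hb : (0:ℝ) < 1 + c / n := by positivity
    have e : x + (n:ℝ) + 1/2 = (n:ℝ) * (1 + c / n) := by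
      field_simp; try ring
    rw [e, Real.log_mul hn0.ne' hb.ne']
  -- assemble
  simp only [hfun]
  rw [hGam, hseq, hstir, hlog]
  ring
lemma hfun_zero : hfun 0 = 1/2 * Real.log 2 + 1/2 := by
  simp only [hfun]
  rw [zero_add, Real.Gamma_one, Real.log_one,
    show (0:ℝ) + 1/2 = 2⁻¹ by norm_num, Real.log_inv]
  ring

lemma hfun_upper {x : ℝ} (hx : 0 < x) : hfun x ≤ Real.log (Real.sqrt (2*π)) :=
  ge_of_tendsto (tendsto_hfun hx) (Eventually.of_forall fun n => hfun_le hx n)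

lemma tendsto_hfun_nat :
    Tendsto (fun n : ℕ => hfun n) atTop (𝓝 (Real.log (Real.sqrt (2*π)))) := by
  have h := tendsto_hfun (x := 1) one_pos
  have h2 : (fun n : ℕ => hfun (1 + n)) = fun n : ℕ => hfun ((n + 1 : ℕ) : ℝ) := by
    funext n; push_cast; ring_nf
  rw [h2] at h
  exact (tendsto_add_atTop_iff_nat 1).mp h

lemma hfun_lower {x : ℝ} (hx : 0 < x) : 1/2 * Real.log 2 + 1/2 ≤ hfun x := by
  have T : Tendsto (fun n : ℕ => hfun (x + n) - hfun n) atTop (𝓝 0) := by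
    simpa using (tendsto_hfun hx).sub tendsto_hfun_nat
  have hle : (0:ℝ) ≤ hfun x - hfun 0 :=
    le_of_tendsto T (Eventually.of_forall fun n => by linarith [hfun_diff hx n])
  have := hfun_zero
  linarith

/-- For every real `x > 0`,
`√(2e) * ((x+1/2)/e)^(x+1/2) ≤ Γ(x+1) ≤ √(2π) * ((x+1/2)/e)^(x+1/2)`,
where `Γ` is the real Gamma function. -/
theorem stmt_0 :
    ∀ x : ℝ, 0 < x →
      Real.sqrt (2 * Real.exp 1) * ((x + 1 / 2) / Real.exp 1) ^ (x + 1 / 2)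
          ≤ Real.Gamma (x + 1) ∧
      Real.Gamma (x + 1)
          ≤ Real.sqrt (2 * Real.pi) * ((x + 1 / 2) / Real.exp 1) ^ (x + 1 / 2) := by
  intro x hx
  have h12 : (0:ℝ) < x + 1/2 := by linarith
  have hb : (0:ℝ) < (x + 1/2) / Real.exp 1 := by positivity
  have hG : (0:ℝ) < Real.Gamma (x + 1) := Real.Gamma_pos_of_pos (by linarith)
  have hrpow : ((x + 1/2) / Real.exp 1) ^ (x + 1/2)
      = Real.exp ((x + 1/2) * (Real.log (x + 1/2) - 1)) := by
    rw [Real.rpow_def_of_pos hb, Real.log_div h12.ne' (Real.exp_ne_zero 1), Real.log_exp]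
    congr 1
    ring
  have hlogG : Real.log (Real.Gamma (x + 1)) = hfun x + (x + 1/2) * (Real.log (x + 1/2) - 1) := by
    simp only [hfun]; ring
  have hGeq : Real.Gamma (x + 1)
      = Real.exp (hfun x + (x + 1/2) * (Real.log (x + 1/2) - 1)) := by
    rw [← hlogG, Real.exp_log hG]
  constructor
  · have hs : Real.sqrt (2 * Real.exp 1) = Real.exp (1/2 * Real.log 2 + 1/2) := by
      have hpos : (0:ℝ) < 2 * Real.exp 1 := by positivity
      rw [← Real.exp_log (Real.sqrt_pos.mpr hpos), Real.log_sqrt hpos.le,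
        Real.log_mul (by norm_num) (Real.exp_ne_zero 1), Real.log_exp]
      congr 1
      ring
    rw [hs, hrpow, hGeq, ← Real.exp_add, Real.exp_le_exp]
    linarith [hfun_lower hx]
  · have hs : Real.sqrt (2 * Real.pi)
        = Real.exp (Real.log (Real.sqrt (2 * π))) := by
      rw [Real.exp_log (Real.sqrt_pos.mpr (by positivity))]
    rw [hs, hrpow, hGeq, ← Real.exp_add, Real.exp_le_exp]
    linarith [hfun_upper hx]
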